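/- For a quaternion y, the quadratic polynomial Δ_y(x) = x^2 - x*t(y) + n(y) (with t(y) = y + conj y and n(y) = y * conj y viewed as real scalars) vanishes at x ∈ ℍ if and only if Re(x) = Re(y) and ‖Im(x)‖ = ‖Im(y)‖. -/

import Mathlib

open Quaternion
/-- The quadratic polynomial `Δ_y(x) = x² - x t(y) + n(y)` vanishes at `x` iff
`Re x = Re y` and `‖Im x‖ = ‖Im y‖`. -/
theorem Delta_eq_zero_iff (y x : ℍ[ℝ]) :
    x ^ 2 - x * (((y + star y).re : ℝ) : ℍ[ℝ]) + (((y * star y).re : ℝ) : ℍ[ℝ]) = 0 ↔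
      x.re = y.re ∧ ‖x.im‖ = ‖y.im‖ := by
  have him : ∀ q : ℍ[ℝ], ‖q.im‖ ^ 2 = q.imI^2 + q.imJ^2 + q.imK^2 := by
    intro q
    rw [sq, ← Quaternion.normSq_eq_norm_mul_self]
    rw [Quaternion.normSq_def']
    simp [Quaternion.im, QuaternionAlgebra.im]
  have hnorm : (‖x.im‖ = ‖y.im‖) ↔ x.imI^2 + x.imJ^2 + x.imK^2 = y.imI^2 + y.imJ^2 + y.imK^2 := by
    rw [← him, ← him]
    constructor
    · intro h; rw [h]
    · intro h
      rw [← Real.sqrt_sq (norm_nonneg x.im), ← Real.sqrt_sq (norm_nonneg y.im), h]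
  rw [hnorm, Quaternion.ext_iff]
  simp [pow_two, Quaternion.re_mul, Quaternion.imI_mul, Quaternion.imJ_mul, Quaternion.imK_mul]
  constructor
  · rintro ⟨h1, h2, h3, h4⟩
    have hd : (x.re - y.re) * (x.imI^2 + x.imJ^2 + x.imK^2) = 0 := by
      linear_combination (x.imI/2) * h2 + (x.imJ/2) * h3 + (x.imK/2) * h4
    rcases mul_eq_zero.mp hd with hd | hd
    · have hre : x.re = y.re := by linarith [sub_eq_zero.mp hd]
      exact ⟨hre, by nlinarith⟩
    · have hI : x.imI = 0 := by nlinarith [sq_nonneg x.imI, sq_nonneg x.imJ, sq_nonneg x.imK]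
      have hJ : x.imJ = 0 := by nlinarith [sq_nonneg x.imI, sq_nonneg x.imJ, sq_nonneg x.imK]
      have hK : x.imK = 0 := by nlinarith [sq_nonneg x.imI, sq_nonneg x.imJ, sq_nonneg x.imK]
      rw [hI, hJ, hK] at h1
      have key : (x.re - y.re)^2 + (y.imI^2 + y.imJ^2 + y.imK^2) = 0 := by
        linear_combination h1
      have e1 : (x.re - y.re)^2 = 0 := le_antisymm
        (by linarith [sq_nonneg y.imI, sq_nonneg y.imJ, sq_nonneg y.imK]) (sq_nonneg _)
      have e2 : y.imI^2 = 0 := le_antisymm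
        (by linarith [sq_nonneg (x.re - y.re), sq_nonneg y.imJ, sq_nonneg y.imK]) (sq_nonneg _)
      have e3 : y.imJ^2 = 0 := le_antisymm
        (by linarith [sq_nonneg (x.re - y.re), sq_nonneg y.imI, sq_nonneg y.imK]) (sq_nonneg _)
      have e4 : y.imK^2 = 0 := le_antisymm
        (by linarith [sq_nonneg (x.re - y.re), sq_nonneg y.imI, sq_nonneg y.imJ]) (sq_nonneg _)
      refine ⟨by have := pow_eq_zero_iff (n := 2) (by norm_num) |>.mp e1; linarith, ?_⟩
      rw [hI, hJ, hK]
      linarith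
  · rintro ⟨h1, h2⟩
    exact ⟨by linear_combination (x.re - y.re) * h1 - h2, by linear_combination 2 * x.imI * h1,
      by linear_combination 2 * x.imJ * h1, by linear_combination 2 * x.imK * h1⟩
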